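/- Let q ≥ 2 be an integer and H ∈ (0,1), and define ρ_H : ℤ → ℝ by ρ_H(r) = (1/2)(|r+1|^{2H} + |r−1|^{2H} − 2|r|^{2H}). Then Σ_{r∈ℤ} |ρ_H(r)|^q < ∞ if and only if H < 1 − 1/(2q). -/

import Mathlib

set_option maxHeartbeats 1000000

open Real Set

/-- second difference of `x ^ (2H)` equals `2H(2H-1) η^(2H-2)` for some `η ∈ (x-1,x+1)`. -/
lemma stmt9_key (H : ℝ) (x : ℝ) (hx : 2 ≤ x) :
    ∃ η ∈ Set.Ioo (x - 1) (x + 1),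
      (x + 1) ^ (2 * H) + (x - 1) ^ (2 * H) - 2 * x ^ (2 * H)
        = (2 * H * (2 * H - 1)) * η ^ (2 * H - 2) := by
  have h1 : (1 : ℝ) ≤ x - 1 := by linarith
  set G : ℝ → ℝ := fun y => (y + 1) ^ (2 * H) - y ^ (2 * H) with hG
  set G' : ℝ → ℝ := fun y => 2 * H * (y + 1) ^ (2 * H - 1) - 2 * H * y ^ (2 * H - 1) with hG'
  have hGd : ∀ y : ℝ, 0 < y → HasDerivAt G (G' y) y := by
    intro y hy
    have h₁ : HasDerivAt (fun y : ℝ => (y + 1) ^ (2 * H)) (2 * H * (y + 1) ^ (2 * H - 1)) y := by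
      have := (Real.hasDerivAt_rpow_const (x := y + 1) (p := 2 * H)
        (Or.inl (by positivity))).comp y ((hasDerivAt_id y).add_const 1)
      simpa [Function.comp_def] using this
    have h₂ : HasDerivAt (fun y : ℝ => y ^ (2 * H)) (2 * H * y ^ (2 * H - 1)) y :=
      Real.hasDerivAt_rpow_const (Or.inl hy.ne')
    exact h₁.sub h₂
  have hab : x - 1 < x := by linarith
  obtain ⟨ξ, hξ, hξeq⟩ := exists_hasDerivAt_eq_slope G G' hab
    (fun y hy => (hGd y (by rcases hy with ⟨hy1, _⟩; linarith)).continuousAt.continuousWithinAt)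
    (fun y hy => hGd y (by rcases hy with ⟨hy1, _⟩; linarith))
  have hξ0 : 0 < ξ := lt_of_lt_of_le (by linarith) hξ.1.le
  set K : ℝ → ℝ := fun y => 2 * H * y ^ (2 * H - 1) with hK
  set K' : ℝ → ℝ := fun y => 2 * H * ((2 * H - 1) * y ^ (2 * H - 2)) with hK'
  have hKd : ∀ y : ℝ, 0 < y → HasDerivAt K (K' y) y := by
    intro y hy
    have h := (Real.hasDerivAt_rpow_const (x := y) (p := 2 * H - 1) (Or.inl hy.ne')).const_mul
      (2 * H)
    rw [show 2 * H - 1 - 1 = 2 * H - 2 by ring] at h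
    exact h
  have hab2 : ξ < ξ + 1 := by linarith
  obtain ⟨η, hη, hηeq⟩ := exists_hasDerivAt_eq_slope K K' hab2
    (fun y hy => (hKd y (by rcases hy with ⟨hy1, _⟩; linarith)).continuousAt.continuousWithinAt)
    (fun y hy => hKd y (by rcases hy with ⟨hy1, _⟩; linarith))
  obtain ⟨hη1, hη2⟩ := hη
  obtain ⟨hξ1, hξ2⟩ := hξ
  refine ⟨η, ⟨by linarith, by linarith⟩, ?_⟩
  have e1 : G x - G (x - 1) = (x + 1) ^ (2 * H) + (x - 1) ^ (2 * H) - 2 * x ^ (2 * H) := by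
    simp only [hG]; rw [show x - 1 + 1 = x by ring]; ring
  have e2 : K (ξ + 1) - K ξ = G' ξ := by simp [hK, hG']
  rw [show x - (x - 1) = 1 by ring, div_one] at hξeq
  rw [show ξ + 1 - ξ = 1 by ring, div_one] at hηeq
  rw [← e1, ← hξeq, ← e2, ← hηeq, hK']; ring

/-- two-sided bound on the terms in the positive tail. -/
lemma stmt9_bound (q : ℕ) (H x : ℝ) (hH1 : H < 1) (hx : 2 ≤ x) :
    (|2 * H * (2 * H - 1)| / 2) ^ q * (x + 1) ^ ((2 * H - 2) * (q : ℝ))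
        ≤ |(1 / 2 : ℝ) * (|x + 1| ^ (2 * H) + |x - 1| ^ (2 * H) - 2 * |x| ^ (2 * H))| ^ q ∧
      |(1 / 2 : ℝ) * (|x + 1| ^ (2 * H) + |x - 1| ^ (2 * H) - 2 * |x| ^ (2 * H))| ^ q
        ≤ (|2 * H * (2 * H - 1)| / 2) ^ q * (x - 1) ^ ((2 * H - 2) * (q : ℝ)) := by
  obtain ⟨η, ⟨hη1, hη2⟩, heq⟩ := stmt9_key H x hx
  have hη0 : 0 < η := by linarith
  have A1 : |x + 1| = x + 1 := abs_of_nonneg (by linarith)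
  have A2 : |x - 1| = x - 1 := abs_of_nonneg (by linarith)
  have A3 : |x| = x := abs_of_nonneg (by linarith)
  rw [A1, A2, A3, heq]
  have habs : |(1 / 2 : ℝ) * (2 * H * (2 * H - 1) * η ^ (2 * H - 2))|
      = |2 * H * (2 * H - 1)| / 2 * η ^ (2 * H - 2) := by
    rw [abs_mul, abs_mul, abs_of_nonneg (Real.rpow_pos_of_pos hη0 _).le,
      abs_of_nonneg (by norm_num : (0:ℝ) ≤ 1/2)]
    ring
  rw [habs, mul_pow]
  have hpow : (η ^ (2 * H - 2)) ^ q = η ^ ((2 * H - 2) * (q : ℝ)) := by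
    rw [← Real.rpow_natCast (η ^ (2 * H - 2)) q, ← Real.rpow_mul hη0.le]
  rw [hpow]
  have hp : (2 * H - 2) * (q : ℝ) ≤ 0 :=
    mul_nonpos_of_nonpos_of_nonneg (by linarith) (by positivity)
  have hC : (0 : ℝ) ≤ (|2 * H * (2 * H - 1)| / 2) ^ q := by positivity
  constructor
  · exact mul_le_mul_of_nonneg_left (Real.rpow_le_rpow_of_nonpos hη0 hη2.le hp) hC
  · exact mul_le_mul_of_nonneg_left
      (Real.rpow_le_rpow_of_nonpos (by linarith) hη1.le hp) hC

/-- For an integer `q ≥ 2` and `H ∈ (0,1)`, with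
`ρ_H(r) = (1/2)(|r+1|^{2H} + |r−1|^{2H} − 2|r|^{2H})` for `r ∈ ℤ`, one has
`Σ_{r∈ℤ} |ρ_H(r)|^q < ∞` if and only if `H < 1 − 1/(2q)`. -/
theorem stmt9 (q : ℕ) (hq : 2 ≤ q) (H : ℝ) (hH : H ∈ Set.Ioo (0 : ℝ) 1) :
    Summable (fun r : ℤ =>
        |(1 / 2 : ℝ) * (|(r : ℝ) + 1| ^ (2 * H) + |(r : ℝ) - 1| ^ (2 * H)
          - 2 * |(r : ℝ)| ^ (2 * H))| ^ q)
      ↔ H < 1 - 1 / (2 * (q : ℝ)) := by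
  obtain ⟨hH0, hH1⟩ := hH
  have hq2 : (2 : ℝ) ≤ (q : ℝ) := by exact_mod_cast hq
  have hq0 : (0 : ℝ) < (q : ℝ) := by linarith
  set F : ℤ → ℝ := fun r : ℤ =>
      |(1 / 2 : ℝ) * (|(r : ℝ) + 1| ^ (2 * H) + |(r : ℝ) - 1| ^ (2 * H)
        - 2 * |(r : ℝ)| ^ (2 * H))| ^ q with hF
  have heven : ∀ n : ℕ, F (-(n : ℤ)) = F (n : ℤ) := by
    intro n
    have a1 : |(-(n : ℝ)) + 1| = |(n : ℝ) - 1| := by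
      rw [show (-(n : ℝ)) + 1 = -((n : ℝ) - 1) by ring, abs_neg]
    have a2 : |(-(n : ℝ)) - 1| = |(n : ℝ) + 1| := by
      rw [show (-(n : ℝ)) - 1 = -((n : ℝ) + 1) by ring, abs_neg]
    simp only [hF]
    push_cast
    rw [a1, a2, abs_neg]
    ring_nf
  have hred : Summable F ↔ Summable (fun n : ℕ => F (n : ℤ)) := by
    constructor
    · intro h
      exact h.comp_injective (fun a b hab => by exact_mod_cast hab)
    · intro h
      exact h.of_nat_of_neg (h.congr fun n => (heven n).symm)
  rcases eq_or_ne H (1 / 2) with hhalf | hhalf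
  · subst hhalf
    have rhs : (1 / 2 : ℝ) < 1 - 1 / (2 * (q : ℝ)) := by
      have : 1 / (2 * (q : ℝ)) < 1 / 2 := by
        rw [div_lt_div_iff₀ (by positivity) (by norm_num)]
        nlinarith
      linarith
    refine iff_of_true ?_ rhs
    rw [hred]
    apply (summable_nat_add_iff (f := fun n : ℕ => F (n : ℤ)) 1).mp
    have hz : (fun n : ℕ => F ((n + 1 : ℕ) : ℤ)) = fun _ => 0 := by
      funext n
      simp only [hF]
      push_cast
      rw [show (2 : ℝ) * (1 / 2) = 1 by norm_num]
      rw [abs_of_nonneg (by positivity : (0:ℝ) ≤ (n : ℝ) + 1 + 1),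
        abs_of_nonneg (by push_cast; linarith [Nat.cast_nonneg (α := ℝ) n] :
          (0:ℝ) ≤ (n : ℝ) + 1 - 1),
        abs_of_nonneg (by positivity : (0:ℝ) ≤ (n : ℝ) + 1),
        Real.rpow_one, Real.rpow_one, Real.rpow_one]
      rw [show (1/2 : ℝ) * ((n : ℝ) + 1 + 1 + ((n : ℝ) + 1 - 1) - 2 * ((n : ℝ) + 1)) = 0 by ring]
      simp [zero_pow, show q ≠ 0 by omega]
    rw [hz]
    exact summable_zero
  -- now H ≠ 1/2
  set C : ℝ := (|2 * H * (2 * H - 1)| / 2) ^ q with hC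
  have hD : 2 * H * (2 * H - 1) ≠ 0 :=
    mul_ne_zero (by positivity) (sub_ne_zero.mpr (by
      intro h; apply hhalf; linarith))
  have hCpos : 0 < C := pow_pos (by positivity) q
  set p : ℝ := (2 * H - 2) * (q : ℝ) with hp
  have hiff : p < -1 ↔ H < 1 - 1 / (2 * (q : ℝ)) := by
    constructor
    · intro h
      have h2 : 1 / (2 * (q : ℝ)) < 1 - H := by
        rw [div_lt_iff₀ (by positivity)]
        nlinarith
      linarith
    · intro h
      have h2 : 1 / (2 * (q : ℝ)) < 1 - H := by linarith
      rw [div_lt_iff₀ (by positivity)] at h2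
      nlinarith
  rw [hred, ← hiff]
  have hcast : ∀ n : ℕ, F (n : ℤ) =
      |(1 / 2 : ℝ) * (|(n : ℝ) + 1| ^ (2 * H) + |(n : ℝ) - 1| ^ (2 * H)
        - 2 * |(n : ℝ)| ^ (2 * H))| ^ q := by
    intro n; simp only [hF]; push_cast; ring_nf
  constructor
  · intro hs
    have h2 := (summable_nat_add_iff (f := fun n : ℕ => F (n : ℤ)) 2).mpr hs
    have hcomp : Summable (fun n : ℕ => C * ((n : ℝ) + 3) ^ p) := by
      apply Summable.of_nonneg_of_le (fun n => by positivity) (fun n => ?_) h2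
      have hb := (stmt9_bound q H ((n + 2 : ℕ) : ℝ) hH1 (by exact_mod_cast Nat.le_add_left 2 n)).1
      rw [hcast (n + 2)]
      calc C * ((n : ℝ) + 3) ^ p
          = C * (((n + 2 : ℕ) : ℝ) + 1) ^ ((2 * H - 2) * (q : ℝ)) := by
            push_cast; rw [hp]; ring_nf
        _ ≤ _ := hb
    have hsum : Summable (fun n : ℕ => ((n : ℝ) + 3) ^ p) := by
      have := (summable_mul_left_iff hCpos.ne').mp hcomp
      exact this
    have hsum2 : Summable (fun n : ℕ => ((n + 3 : ℕ) : ℝ) ^ p) :=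
      hsum.congr fun n => by push_cast; ring_nf
    have := (summable_nat_add_iff (f := fun n : ℕ => ((n:ℝ)) ^ p) 3).mp hsum2
    exact Real.summable_nat_rpow.mp this
  · intro hplt
    rw [← summable_nat_add_iff (f := fun n : ℕ => F (n : ℤ)) 2]
    have hmaj : Summable (fun n : ℕ => C * ((n : ℝ) + 1) ^ p) := by
      have h1 := (summable_nat_add_iff (f := fun n : ℕ => ((n:ℝ)) ^ p) 1).mpr (Real.summable_nat_rpow.mpr hplt)
      exact ((h1.congr fun n => by push_cast; ring_nf :
        Summable fun n : ℕ => ((n : ℝ) + 1) ^ p)).mul_left C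
    apply Summable.of_nonneg_of_le (fun n => by rw [hcast]; positivity) (fun n => ?_) hmaj
    have hb := (stmt9_bound q H ((n + 2 : ℕ) : ℝ) hH1 (by exact_mod_cast Nat.le_add_left 2 n)).2
    rw [hcast (n + 2)]
    calc _ ≤ C * (((n + 2 : ℕ) : ℝ) - 1) ^ ((2 * H - 2) * (q : ℝ)) := hb
      _ = C * ((n : ℝ) + 1) ^ p := by push_cast; rw [hp]; ring_nf
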